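/- Let F be a field and let A ∈ M_n(F) be a nil-clean matrix. Then there exists a non-negative integer k with 0 ≤ k ≤ n such that the trace of A equals k·1, where k·1 denotes the image of the integer k in F. -/

import Mathlib

/-- An element of a ring is *nil-clean* if it is the sum of an idempotent
and a nilpotent element. -/
def IsNilClean {R : Type*} [Ring R] (a : R) : Prop :=
  ∃ e n : R, e ^ 2 = e ∧ IsNilpotent n ∧ a = e + n

theorem idem_trace {F : Type*} [Field F] {n : ℕ} (E : Matrix (Fin n) (Fin n) F)
    (he : E ^ 2 = E) : ∃ k : ℕ, k ≤ n ∧ E.trace = (k : F) := by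
  set f := Matrix.toLin' E with hf
  have hff : f ∘ₗ f = f := by
    rw [hf, ← Matrix.toLin'_mul, ← pow_two, he]
  obtain ⟨p, hp⟩ := (LinearMap.isProj_iff_isIdempotentElem f).mpr hff
  refine ⟨Module.finrank F p, ?_, ?_⟩
  · simpa using Submodule.finrank_le p
  · have := hp.trace
    rw [LinearMap.trace_eq_matrix_trace F (Pi.basisFun F (Fin n)) f, hf] at this
    simpa [LinearMap.toMatrix_eq_toMatrix'] using this

/-- The trace of a nil-clean matrix is of the form `k·1` for some `0 ≤ k ≤ n`. -/
theorem stmt_4 {F : Type*} [Field F] {n : ℕ} (A : Matrix (Fin n) (Fin n) F)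
    (hA : IsNilClean A) :
    ∃ k : ℕ, k ≤ n ∧ A.trace = (k : F) := by
  obtain ⟨e, N, he, hN, rfl⟩ := hA
  obtain ⟨k, hk, hke⟩ := idem_trace e he
  refine ⟨k, hk, ?_⟩
  have hNt : N.trace = 0 := (Matrix.isNilpotent_trace_of_isNilpotent hN).eq_zero
  rw [Matrix.trace_add, hke, hNt, add_zero]
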